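/- Importance-Weighted Projection Recovers the Matrix–Vector-Squared Product (core identity of Theorem B.18): Let N ≥ 1 and let W ∈ ℂ^{N×N} with columns w_j := W e_j satisfying a_j := ‖w_j‖₂ > 0 for all j; set |ŵ_j⟩ := w_j / a_j. Let |ψ⟩ = Σ_j ψ_j |j⟩ ∈ ℂ^N, define |ψ₁⟩ := Σ_j a_j ψ_j |j⟩ and |φ⟩ := Σ_j ψ_j |j⟩ ⊗ |ŵ_j⟩ ∈ ℂ^N ⊗ ℂ^N. Then (⟨ψ₁| ⊗ I_N)|φ⟩ = Σ_j a_j |ψ_j|² |ŵ_j⟩ = W g(|ψ⟩), where g is the entrywise map g(x) = |x|², i.e. g(|ψ⟩) is the vector with entries |ψ_j|². Moreover, if the spectral norm satisfies ‖W‖₂ ≤ 1, then a_j ≤ 1 for every j and ‖|ψ₁⟩‖₂ ≤ ‖|ψ⟩‖₂. -/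

import Mathlib

noncomputable section

/-- Reinterpret a plain function as an element of `EuclideanSpace`. -/
def toEuc {𝕜 : Type*} [RCLike 𝕜] {ι : Type*} (v : ι → 𝕜) : EuclideanSpace 𝕜 ι := WithLp.toLp 2 v

/-- The spectral (ℓ²→ℓ²) operator norm of a matrix. -/
def specNorm {𝕜 : Type*} [RCLike 𝕜] {m n : Type*} [Fintype m] [Fintype n] [DecidableEq n]
    (A : Matrix m n 𝕜) : ℝ :=
  ‖LinearMap.toContinuousLinearMap (Matrix.toEuclideanLin A)‖

/-- **Importance-weighted projection recovers the matrix–vector-squared product**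
(core identity of Theorem B.18).  With `ψ₁ = Σ_j a_j ψ_j |j⟩` and
`φ = Σ_j ψ_j |j⟩ ⊗ |ŵ_j⟩`, one has
`(⟨ψ₁| ⊗ I)|φ⟩ = Σ_j a_j |ψ_j|² ŵ_j = W g(ψ)` where `g(x) = |x|²` entrywise.
Moreover, if `‖W‖₂ ≤ 1` then every column norm satisfies `a_j ≤ 1` and
`‖ψ₁‖₂ ≤ ‖ψ‖₂`. -/
theorem importance_weighted_projection
    (N : ℕ) (hN : 1 ≤ N)
    (W : Matrix (Fin N) (Fin N) ℂ)
    (aN : Fin N → ℝ)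
    (haN : ∀ j, aN j = ‖toEuc fun i => W i j‖)
    (haNpos : ∀ j, 0 < aN j)
    (ψ : EuclideanSpace ℂ (Fin N))
    (ψ₁ : EuclideanSpace ℂ (Fin N))
    (hψ₁ : ψ₁ = toEuc fun j => (aN j : ℂ) * ψ j)
    (φ : EuclideanSpace ℂ (Fin N × Fin N))
    (hφ : φ = toEuc fun p => ψ p.1 * (W p.2 p.1 / (aN p.1 : ℂ))) :
    ((toEuc fun i => ∑ j, (starRingEnd ℂ) (ψ₁ j) * φ (j, i))
        = (toEuc fun i => ∑ j, (aN j : ℂ) * ((‖ψ j‖ ^ 2 : ℝ) : ℂ)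
            * (W i j / (aN j : ℂ)))) ∧
    (toEuc fun i => ∑ j, (starRingEnd ℂ) (ψ₁ j) * φ (j, i))
        = toEuc (W.mulVec fun j => ((‖ψ j‖ ^ 2 : ℝ) : ℂ)) ∧
    (specNorm W ≤ 1 → (∀ j, aN j ≤ 1) ∧ ‖ψ₁‖ ≤ ‖ψ‖) := by
  have hsq : ∀ j, (starRingEnd ℂ) (ψ j) * ψ j = ((‖ψ j‖ ^ 2 : ℝ) : ℂ) := by
    intro j
    rw [mul_comm, Complex.mul_conj]
    norm_cast
    rw [Complex.sq_norm]
  have h1 : (toEuc fun i => ∑ j, (starRingEnd ℂ) (ψ₁ j) * φ (j, i))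
      = (toEuc fun i => ∑ j, (aN j : ℂ) * ((‖ψ j‖ ^ 2 : ℝ) : ℂ)
          * (W i j / (aN j : ℂ))) := by
    subst hψ₁ hφ
    congr 1
    funext i
    refine Finset.sum_congr rfl fun j _ => ?_
    simp only [toEuc, WithLp.ofLp_toLp, map_mul, Complex.conj_ofReal]
    calc (aN j : ℂ) * (starRingEnd ℂ) (ψ j) * (ψ j * (W i j / (aN j : ℂ)))
        = (aN j : ℂ) * ((starRingEnd ℂ) (ψ j) * ψ j) * (W i j / (aN j : ℂ)) := by ring
      _ = _ := by rw [hsq j]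
  have h2 : (toEuc fun i => ∑ j, (starRingEnd ℂ) (ψ₁ j) * φ (j, i))
      = toEuc (W.mulVec fun j => ((‖ψ j‖ ^ 2 : ℝ) : ℂ)) := by
    rw [h1]
    congr 1
    funext i
    simp only [toEuc, Matrix.mulVec, dotProduct]
    refine Finset.sum_congr rfl fun j _ => ?_
    have hj : (aN j : ℂ) ≠ 0 := by exact_mod_cast (haNpos j).ne'
    field_simp
  refine ⟨h1, h2, fun hspec => ?_⟩
  set L := LinearMap.toContinuousLinearMap (Matrix.toEuclideanLin W) with hL
  have hcol : ∀ j, L (EuclideanSpace.single j 1) = toEuc fun i => W i j := by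
    intro j
    ext i
    show Matrix.toEuclideanLin W (EuclideanSpace.single j 1) i = W i j
    rw [Matrix.toEuclideanLin_apply]
    show W.mulVec (Pi.single j 1) i = W i j
    simp [Matrix.mulVec_single]
  have haN1 : ∀ j, aN j ≤ 1 := by
    intro j
    rw [haN j, ← hcol j]
    calc ‖L (EuclideanSpace.single j 1)‖ ≤ ‖L‖ * ‖(EuclideanSpace.single j 1 : EuclideanSpace ℂ (Fin N))‖ :=
          L.le_opNorm _
      _ ≤ 1 * 1 := by
          apply mul_le_mul hspec ?_ (norm_nonneg _) (le_trans (norm_nonneg _) hspec)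
          rw [EuclideanSpace.norm_single]
          simp
      _ = 1 := by ring
  refine ⟨haN1, ?_⟩
  rw [hψ₁]
  rw [EuclideanSpace.norm_eq, EuclideanSpace.norm_eq]
  apply Real.sqrt_le_sqrt
  apply Finset.sum_le_sum
  intro j _
  simp only [toEuc, WithLp.ofLp_toLp]
  show ‖(aN j : ℂ) * ψ j‖ ^ 2 ≤ ‖ψ j‖ ^ 2
  rw [norm_mul, Complex.norm_real, Real.norm_of_nonneg (haNpos j).le]
  have h := haN1 j
  rw [mul_pow]
  have ha2 : aN j ^ 2 ≤ 1 := by nlinarith [(haNpos j).le]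
  exact mul_le_of_le_one_left (sq_nonneg _) ha2
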